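/- Let α be a first countable T1 topological space having at least one limit point (a point x₀ ∈ α such that every neighborhood of x₀ contains a point different from x₀), and let I be an admissible ideal on ℕ. If for every sequence η : ℕ → α and every x ∈ α, I-convergence of η to x implies I*-convergence of η to x, then I satisfies condition (AP). -/

import Mathlib

/-- An ideal on ℕ: a collection of subsets of ℕ containing ∅,
closed under subsets and finite unions. -/
structure IsIdeal (I : Set (Set ℕ)) : Prop where
  empty_mem : (∅ : Set ℕ) ∈ I
  subset_mem : ∀ {A B : Set ℕ}, A ∈ I → B ⊆ A → B ∈ I
  union_mem : ∀ {A B : Set ℕ}, A ∈ I → B ∈ I → A ∪ B ∈ I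

/-- A non-trivial ideal: an ideal with I ≠ {∅} and ℕ ∉ I. -/
def IsNonTrivialIdeal (I : Set (Set ℕ)) : Prop :=
  IsIdeal I ∧ I ≠ {∅} ∧ (Set.univ : Set ℕ) ∉ I

/-- An admissible ideal: a non-trivial ideal containing every singleton. -/
def IsAdmissibleIdeal (I : Set (Set ℕ)) : Prop :=
  IsNonTrivialIdeal I ∧ ∀ n : ℕ, ({n} : Set ℕ) ∈ I

variable {α : Type*} [TopologicalSpace α]

/-- A sequence η is I-convergent to x if for every neighborhood U of x,
the set {n | η n ∉ U} belongs to I. -/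
def IConv (I : Set (Set ℕ)) (η : ℕ → α) (x : α) : Prop :=
  ∀ U ∈ nhds x, {n : ℕ | η n ∉ U} ∈ I

/-- A sequence η is I*-convergent to x if there is P ⊆ ℕ with ℕ \ P ∈ I such that
the subsequence indexed by P converges to x (for every neighborhood U of x,
{n ∈ P | η n ∉ U} is finite). -/
def IStarConv (I : Set (Set ℕ)) (η : ℕ → α) (x : α) : Prop :=
  ∃ P : Set ℕ, Pᶜ ∈ I ∧ ∀ U ∈ nhds x, {n : ℕ | n ∈ P ∧ η n ∉ U}.Finite

/-- x is an I-limit point of η if there exists P ∉ I such that the subsequence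
of η indexed by P converges to x. -/
def IsILimitPt (I : Set (Set ℕ)) (η : ℕ → α) (x : α) : Prop :=
  ∃ P : Set ℕ, P ∉ I ∧ ∀ U ∈ nhds x, {n : ℕ | n ∈ P ∧ η n ∉ U}.Finite

/-- x is an I-cluster point of η if for every neighborhood U of x,
{n | η n ∈ U} ∉ I. -/
def IsIClusterPt (I : Set (Set ℕ)) (η : ℕ → α) (x : α) : Prop :=
  ∀ U ∈ nhds x, {n : ℕ | η n ∈ U} ∉ I

/-- Condition (AP): for every countable family of pairwise disjoint sets in I there
is a countable family K with each symmetric difference Hᵢ Δ Kᵢ finite and ⋃ Kᵢ ∈ I. -/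
def APCondition (I : Set (Set ℕ)) : Prop :=
  ∀ H : ℕ → Set ℕ, (∀ i, H i ∈ I) → Pairwise (Function.onFun Disjoint H) →
    ∃ K : ℕ → Set ℕ, (∀ i, (symmDiff (H i) (K i)).Finite) ∧ (⋃ i, K i) ∈ I

theorem stmt_7 [FirstCountableTopology α] [T1Space α]
    (hlimit : ∃ x₀ : α, ∀ U ∈ nhds x₀, ∃ y ∈ U, y ≠ x₀)
    (I : Set (Set ℕ)) (hI : IsAdmissibleIdeal I)
    (h : ∀ (η : ℕ → α) (x : α), IConv I η x → IStarConv I η x) :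
    APCondition I := by
  classical
  obtain ⟨x₀, hx₀⟩ := hlimit
  obtain ⟨u, hu⟩ := (nhds x₀).exists_antitone_basis
  intro H hH hdisj
  have hy : ∀ j, ∃ y ∈ u j, y ≠ x₀ := fun j => hx₀ (u j) (hu.mem j)
  choose y hyu hyne using hy
  set η : ℕ → α := fun n => if hex : ∃ i, n ∈ H i then y hex.choose else x₀ with hηdef
  have hηH : ∀ i n, n ∈ H i → η n = y i := by
    intro i n hn
    have hex : ∃ j, n ∈ H j := ⟨i, hn⟩
    have heq : hex.choose = i := by
      by_contra hne
      exact Set.disjoint_left.mp (hdisj hne) hex.choose_spec hn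
    simp only [hηdef, dif_pos hex, heq]
  have hbUnion : ∀ (s : Finset ℕ), (⋃ i ∈ s, H i) ∈ I := by
    intro s
    induction s using Finset.induction with
    | empty => simpa using hI.1.1.empty_mem
    | insert _ _ hx ih =>
      rw [Finset.set_biUnion_insert]
      exact hI.1.1.union_mem (hH _) ih
  have hconv : IConv I η x₀ := by
    intro U hU
    obtain ⟨j, -, hj⟩ := hu.toHasBasis.mem_iff.mp hU
    refine hI.1.1.subset_mem (hbUnion (Finset.range j)) ?_
    intro n hn
    simp only [Set.mem_setOf_eq] at hn
    by_cases hex : ∃ i, n ∈ H i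
    · obtain ⟨i, hi⟩ := hex
      have hηn := hηH i n hi
      simp only [Set.mem_iUnion, Finset.mem_range]
      refine ⟨i, ?_, hi⟩
      by_contra hge
      push_neg at hge
      exact hn (hj (hu.antitone hge (hηn ▸ hyu i)))
    · refine absurd ?_ hn
      simp only [hηdef, dif_neg hex]
      exact mem_of_mem_nhds hU
  obtain ⟨P, hPc, hfin⟩ := h η x₀ hconv
  refine ⟨fun i => H i \ P, ?_, ?_⟩
  · intro i
    have hU : {y i}ᶜ ∈ nhds x₀ :=
      (isOpen_compl_singleton).mem_nhds (by simp [Ne.symm (hyne i)])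
    refine (hfin _ hU).subset ?_
    intro n hn
    rcases Set.mem_symmDiff.mp hn with ⟨hnH, hnK⟩ | ⟨hnK, hnH⟩
    · have hnP : n ∈ P := by
        by_contra hnp; exact hnK ⟨hnH, hnp⟩
      exact ⟨hnP, by simp [hηH i n hnH]⟩
    · exact absurd hnK.1 hnH
  · refine hI.1.1.subset_mem hPc ?_
    intro n hn
    simp only [Set.mem_iUnion] at hn
    obtain ⟨i, -, hnP⟩ := hn
    exact hnP
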